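/- Let 𝒳 be a finite set with |𝒳| ≥ 2, and P a pmf on 𝒳 with P(x) > 0 for all x and entropy H(P) > 0 (in bits). Let ℓ : 𝒳 → ℝ≥0 satisfy Kraft's inequality Σ_x 2^{−ℓ(x)} ≤ 1 and E[ℓ(X)] ≤ log₂|𝒳| (with X ∼ P). Then √(E[ℓ(X)²]) / E[ℓ(X)] ≤ (log₂|𝒳| / H(P)) · (min_{x∈𝒳} P(x))^{−1/2}. -/

import Mathlib

open Real Finset

/-- Uniform bound on the maximizer `z*(ℓ) = √(E[ℓ(X)²])/E[ℓ(X)]`: for any length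
function `ℓ ≥ 0` satisfying Kraft's inequality with `E[ℓ(X)] ≤ log₂|𝒳|`,
`√(E[ℓ(X)²])/E[ℓ(X)] ≤ (log₂|𝒳|/H(P))·(min_x P(x))^{−1/2}`. -/
theorem stmt_18 {𝒳 : Type*} [Fintype 𝒳] [Nonempty 𝒳] (hcard : 2 ≤ Fintype.card 𝒳)
    (P : 𝒳 → ℝ) (hP : ∀ x, 0 < P x) (hPsum : ∑ x, P x = 1)
    (hH : 0 < ∑ x, P x * Real.logb 2 (1 / P x))
    (ℓ : 𝒳 → ℝ) (hℓ : ∀ x, 0 ≤ ℓ x) (hKraft : ∑ x, (2 : ℝ) ^ (-ℓ x) ≤ 1)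
    (hEL : ∑ x, P x * ℓ x ≤ Real.logb 2 (Fintype.card 𝒳)) :
    Real.sqrt (∑ x, P x * ℓ x ^ 2) / (∑ x, P x * ℓ x) ≤
      (Real.logb 2 (Fintype.card 𝒳) / (∑ x, P x * Real.logb 2 (1 / P x))) *
        (1 / Real.sqrt (Finset.univ.inf' Finset.univ_nonempty P)) := by
  have hlog2 : (0:ℝ) < Real.log 2 := Real.log_pos one_lt_two
  set H := ∑ x, P x * Real.logb 2 (1 / P x) with hHdef
  set E := ∑ x, P x * ℓ x with hEdef
  -- Step 1: H ≤ E (source coding lower bound via Kraft)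
  have key : ∀ x : 𝒳, P x - (2:ℝ)^(-ℓ x) ≤
      (P x * ℓ x - P x * Real.logb 2 (1 / P x)) * Real.log 2 := by
    intro x
    have hq : (0:ℝ) < (2:ℝ)^(-ℓ x) := Real.rpow_pos_of_pos two_pos _
    have h1 : Real.log ((2:ℝ)^(-ℓ x) / P x) ≤ (2:ℝ)^(-ℓ x) / P x - 1 :=
      Real.log_le_sub_one_of_pos (div_pos hq (hP x))
    have hld : Real.log ((2:ℝ)^(-ℓ x) / P x) = (-ℓ x * Real.log 2) - Real.log (P x) := by
      rw [Real.log_div (ne_of_gt hq) (ne_of_gt (hP x)), Real.log_rpow two_pos]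
    have hlb : Real.logb 2 (1 / P x) = - (Real.log (P x) / Real.log 2) := by
      rw [Real.logb, Real.log_div one_ne_zero (ne_of_gt (hP x)), Real.log_one]
      ring
    rw [hld] at h1
    have h2 := mul_le_mul_of_nonneg_left h1 (le_of_lt (hP x))
    have h3 : P x * ((2:ℝ)^(-ℓ x) / P x - 1) = (2:ℝ)^(-ℓ x) - P x := by
      field_simp [(hP x).ne']
    rw [h3] at h2
    rw [hlb]
    have h4 : (P x * ℓ x - P x * -(Real.log (P x) / Real.log 2)) * Real.log 2
        = P x * ℓ x * Real.log 2 + P x * Real.log (P x) := by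
      field_simp [(hP x).ne']
      ring
    rw [h4]
    nlinarith
  have hsum : (1 : ℝ) - (∑ x, (2:ℝ)^(-ℓ x)) ≤ (E - H) * Real.log 2 := by
    calc (1:ℝ) - ∑ x, (2:ℝ)^(-ℓ x)
        = ∑ x, P x - ∑ x, (2:ℝ)^(-ℓ x) := by rw [hPsum]
      _ ≤ ∑ x, (P x * ℓ x - P x * Real.logb 2 (1 / P x)) * Real.log 2 := by
          rw [← Finset.sum_sub_distrib]
          exact Finset.sum_le_sum (fun x _ => key x)
      _ = (E - H) * Real.log 2 := by
          rw [← Finset.sum_mul, Finset.sum_sub_distrib]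
  have hHE : H ≤ E := by
    have h0 : (0:ℝ) ≤ (E - H) * Real.log 2 := le_trans (by linarith) hsum
    nlinarith
  have hEpos : 0 < E := lt_of_lt_of_le hH hHE
  -- Step 2: min probability
  set p0 := Finset.univ.inf' Finset.univ_nonempty P with hp0def
  have hp0 : 0 < p0 := by
    rw [hp0def, Finset.lt_inf'_iff]
    exact fun x _ => hP x
  have hp0le : ∀ x, p0 ≤ P x := fun x => Finset.inf'_le _ (Finset.mem_univ x)
  have hterm : ∀ x : 𝒳, P x * ℓ x ≤ E := by
    intro x
    exact Finset.single_le_sum (fun y _ => mul_nonneg (le_of_lt (hP y)) (hℓ y))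
      (Finset.mem_univ x)
  have hℓbd : ∀ x : 𝒳, ℓ x ≤ E / p0 := by
    intro x
    rw [le_div_iff₀ hp0]
    calc ℓ x * p0 ≤ ℓ x * P x := mul_le_mul_of_nonneg_left (hp0le x) (hℓ x)
      _ = P x * ℓ x := mul_comm _ _
      _ ≤ E := hterm x
  have hE2 : ∑ x, P x * ℓ x ^ 2 ≤ E ^ 2 / p0 := by
    calc ∑ x, P x * ℓ x ^ 2 ≤ ∑ x, P x * ℓ x * (E / p0) := by
          apply Finset.sum_le_sum
          intro x _
          have : P x * ℓ x ^ 2 = P x * ℓ x * ℓ x := by ring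
          rw [this]
          exact mul_le_mul_of_nonneg_left (hℓbd x)
            (mul_nonneg (le_of_lt (hP x)) (hℓ x))
      _ = E * (E / p0) := by rw [← Finset.sum_mul]
      _ = E ^ 2 / p0 := by ring
  have hsqrt : Real.sqrt (∑ x, P x * ℓ x ^ 2) ≤ E / Real.sqrt p0 := by
    calc Real.sqrt (∑ x, P x * ℓ x ^ 2) ≤ Real.sqrt (E ^ 2 / p0) :=
          Real.sqrt_le_sqrt hE2
      _ = E / Real.sqrt p0 := by
          rw [Real.sqrt_div (sq_nonneg E), Real.sqrt_sq hEpos.le]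
  -- Step 3: combine
  have hmain : Real.sqrt (∑ x, P x * ℓ x ^ 2) / E ≤ 1 / Real.sqrt p0 := by
    rw [div_le_div_iff₀ hEpos (Real.sqrt_pos.mpr hp0)]
    calc Real.sqrt (∑ x, P x * ℓ x ^ 2) * Real.sqrt p0
        ≤ (E / Real.sqrt p0) * Real.sqrt p0 :=
          mul_le_mul_of_nonneg_right hsqrt (Real.sqrt_nonneg _)
      _ = E := by field_simp
      _ = 1 * E := (one_mul E).symm
  have hlogq : (1:ℝ) ≤ Real.logb 2 (Fintype.card 𝒳) / H :=
    (one_le_div hH).mpr (hHE.trans hEL)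
  calc Real.sqrt (∑ x, P x * ℓ x ^ 2) / E ≤ 1 / Real.sqrt p0 := hmain
    _ ≤ (Real.logb 2 (Fintype.card 𝒳) / H) * (1 / Real.sqrt p0) :=
        le_mul_of_one_le_left (by positivity) hlogq
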